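/- Let A ∈ ℝ^{m×m} be symmetric with orthonormal eigenbasis e₁,…,e_m and corresponding eigenvalues λ₁ = … = λ_{l₀} = 0, λ_{l₀+1},…,λ_{l₀+l₋} < 0, and λ_{l₀+l₋+1},…,λ_m > 0, and set l₊ = m − l₀ − l₋. A subspace N ⊆ ℝ^m is maximal nonnegative for A if and only if there exists an l₋×l₊ real matrix M such that N = { v ∈ ℝ^m : ⟨e_{l₀+r}, v⟩ = Σ_{s=1}^{l₊} M_{rs} ⟨e_{l₀+l₋+s}, v⟩ for r = 1,…,l₋ }, and the matrix D₋ M D₊⁻¹ has operator norm at most 1, where D₋ = diag(√|λ_{l₀+1}|,…,√|λ_{l₀+l₋}|) and D₊ = diag(√λ_{l₀+l₋+1},…,√λ_m). -/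

import Mathlib

open scoped RealInnerProductSpace

lemma aux_expand {n : ℕ} (e : Fin n → EuclideanSpace ℝ (Fin n)) (he : Orthonormal ℝ e)
    (v : EuclideanSpace ℝ (Fin n)) : ∑ i, ⟪e i, v⟫ • e i = v := by
  rcases Nat.eq_zero_or_pos n with h | h
  · subst h
    have : Subsingleton (EuclideanSpace ℝ (Fin 0)) := by
      constructor; intro a b; ext i; exact absurd i.2 (by omega)
    exact Subsingleton.elim _ _
  · haveI : Nonempty (Fin n) := ⟨⟨0, h⟩⟩
    let b := basisOfOrthonormalOfCardEqFinrank he (by simp)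
    have hb : ⇑b = e := coe_basisOfOrthonormalOfCardEqFinrank he _
    have hob : Orthonormal ℝ ⇑b := by rwa [hb]
    have := (b.toOrthonormalBasis hob).sum_repr' v
    rw [show ⇑(b.toOrthonormalBasis hob) = e from by
      rw [Module.Basis.coe_toOrthonormalBasis, hb]] at this
    exact this

lemma aux_quad {n : ℕ} (A : EuclideanSpace ℝ (Fin n) →ₗ[ℝ] EuclideanSpace ℝ (Fin n))
    (hA : ∀ u v : EuclideanSpace ℝ (Fin n), ⟪A u, v⟫ = ⟪u, A v⟫)
    (e : Fin n → EuclideanSpace ℝ (Fin n)) (lam : Fin n → ℝ) (he : Orthonormal ℝ e)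
    (heig : ∀ i, A (e i) = lam i • e i) (v : EuclideanSpace ℝ (Fin n)) :
    ⟪v, A v⟫ = ∑ i, lam i * ⟪e i, v⟫ ^ 2 := by
  have h1 : ⟪v, A v⟫ = ⟪∑ i, ⟪e i, v⟫ • e i, A v⟫ := by rw [aux_expand e he v]
  rw [h1, sum_inner]
  refine Finset.sum_congr rfl fun i _ => ?_
  rw [real_inner_smul_left, ← hA, heig, real_inner_smul_left]
  ring

lemma inner_sum_smul {n k : ℕ} (e : Fin n → EuclideanSpace ℝ (Fin n)) (he : Orthonormal ℝ e)
    (g : Fin k → Fin n) (c : Fin k → ℝ) (j : Fin n) :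
    ⟪e j, ∑ s, c s • e (g s)⟫ = ∑ s, if j = g s then c s else 0 := by
  rw [inner_sum]
  refine Finset.sum_congr rfl fun s _ => ?_
  rw [real_inner_smul_right, orthonormal_iff_ite.mp he]
  split <;> simp

lemma aux_split {l₀ lneg lpos : ℕ} (f : Fin (l₀ + lneg + lpos) → ℝ) :
    ∑ i, f i = (∑ k : Fin l₀, f ⟨k, by omega⟩) + (∑ r : Fin lneg, f ⟨l₀ + r, by omega⟩)
      + ∑ s : Fin lpos, f ⟨l₀ + lneg + s, by omega⟩ := by
  rw [Fin.sum_univ_add (f := f), Fin.sum_univ_add (f := fun i => f (Fin.castAdd lpos i))]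
  rfl

lemma coord_hit {n k : ℕ} (e : Fin n → EuclideanSpace ℝ (Fin n)) (he : Orthonormal ℝ e)
    (g : Fin k → Fin n) (hg : Function.Injective g) (c : Fin k → ℝ) (s₀ : Fin k) :
    ⟪e (g s₀), ∑ s, c s • e (g s)⟫ = c s₀ := by
  rw [inner_sum_smul e he]
  simp [hg.eq_iff]

lemma coord_miss {n k : ℕ} (e : Fin n → EuclideanSpace ℝ (Fin n)) (he : Orthonormal ℝ e)
    (g : Fin k → Fin n) (c : Fin k → ℝ) (j : Fin n) (hj : ∀ s, j ≠ g s) :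
    ⟪e j, ∑ s, c s • e (g s)⟫ = 0 := by
  rw [inner_sum_smul e he]
  exact Finset.sum_eq_zero fun s _ => if_neg (hj s)

section Setup
variable {l₀ lneg lpos : ℕ}

def jz (l₀ lneg lpos : ℕ) (k : Fin l₀) : Fin (l₀ + lneg + lpos) := ⟨k, by omega⟩
def jn (l₀ lneg lpos : ℕ) (r : Fin lneg) : Fin (l₀ + lneg + lpos) := ⟨l₀ + r, by omega⟩
def jp (l₀ lneg lpos : ℕ) (s : Fin lpos) : Fin (l₀ + lneg + lpos) := ⟨l₀ + lneg + s, by omega⟩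

lemma jz_inj : Function.Injective (jz l₀ lneg lpos) := fun a b h => by
  simpa [jz, Fin.ext_iff] using h
lemma jn_inj : Function.Injective (jn l₀ lneg lpos) := fun a b h => by
  simp only [jn, Fin.ext_iff] at h ⊢; omega
lemma jp_inj : Function.Injective (jp l₀ lneg lpos) := fun a b h => by
  simp only [jp, Fin.ext_iff] at h ⊢; omega

lemma jz_ne_jn (k : Fin l₀) (r : Fin lneg) : jz l₀ lneg lpos k ≠ jn l₀ lneg lpos r := fun h => by
  simp only [jz, jn, Fin.ext_iff] at h; omega
lemma jz_ne_jp (k : Fin l₀) (s : Fin lpos) : jz l₀ lneg lpos k ≠ jp l₀ lneg lpos s := fun h => by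
  simp only [jz, jp, Fin.ext_iff] at h; omega
lemma jn_ne_jp (r : Fin lneg) (s : Fin lpos) : jn l₀ lneg lpos r ≠ jp l₀ lneg lpos s := fun h => by
  simp only [jn, jp, Fin.ext_iff] at h; omega

lemma index_cases (i : Fin (l₀ + lneg + lpos)) :
    (∃ k : Fin l₀, i = jz l₀ lneg lpos k) ∨ (∃ r : Fin lneg, i = jn l₀ lneg lpos r) ∨
      ∃ s : Fin lpos, i = jp l₀ lneg lpos s := by
  rcases lt_or_ge (i : ℕ) l₀ with h | h
  · exact Or.inl ⟨⟨i, h⟩, Fin.ext rfl⟩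
  rcases lt_or_ge (i : ℕ) (l₀ + lneg) with h2 | h2
  · exact Or.inr (Or.inl ⟨⟨(i : ℕ) - l₀, by omega⟩, Fin.ext (by simp [jn]; omega)⟩)
  · exact Or.inr (Or.inr ⟨⟨(i : ℕ) - l₀ - lneg, by omega⟩, Fin.ext (by simp [jp]; omega)⟩)

end Setup

section Main
variable {l₀ lneg lpos : ℕ}
variable (A : EuclideanSpace ℝ (Fin (l₀ + lneg + lpos)) →ₗ[ℝ] EuclideanSpace ℝ (Fin (l₀ + lneg + lpos)))
  (e : Fin (l₀ + lneg + lpos) → EuclideanSpace ℝ (Fin (l₀ + lneg + lpos)))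
  (lam : Fin (l₀ + lneg + lpos) → ℝ)

lemma Qform (hA : ∀ u v, ⟪A u, v⟫ = ⟪u, A v⟫) (he : Orthonormal ℝ e)
    (heig : ∀ i, A (e i) = lam i • e i)
    (hzero : ∀ i : Fin (l₀ + lneg + lpos), (i : ℕ) < l₀ → lam i = 0)
    (v : EuclideanSpace ℝ (Fin (l₀ + lneg + lpos))) :
    ⟪v, A v⟫ = (∑ r : Fin lneg, lam (jn l₀ lneg lpos r) * ⟪e (jn l₀ lneg lpos r), v⟫ ^ 2)
      + ∑ s : Fin lpos, lam (jp l₀ lneg lpos s) * ⟪e (jp l₀ lneg lpos s), v⟫ ^ 2 := by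
  rw [aux_quad A hA e lam he heig v, aux_split (fun i => lam i * ⟪e i, v⟫ ^ 2)]
  have h0 : (∑ k : Fin l₀, lam (jz l₀ lneg lpos k) * ⟪e (jz l₀ lneg lpos k), v⟫ ^ 2) = 0 :=
    Finset.sum_eq_zero fun k _ => by rw [hzero (jz l₀ lneg lpos k) k.2]; ring
  rw [show (∑ k : Fin l₀, lam ⟨(k : ℕ), by omega⟩ * ⟪e ⟨(k : ℕ), by omega⟩, v⟫ ^ 2) =
    (∑ k : Fin l₀, lam (jz l₀ lneg lpos k) * ⟪e (jz l₀ lneg lpos k), v⟫ ^ 2) from rfl, h0]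
  rw [zero_add]; rfl

lemma eq_zero_of_coords (he : Orthonormal ℝ e) (v : EuclideanSpace ℝ (Fin (l₀ + lneg + lpos)))
    (h : ∀ i, ⟪e i, v⟫ = 0) : v = 0 := by
  rw [← aux_expand e he v]
  exact Finset.sum_eq_zero fun i _ => by rw [h i, zero_smul]

end Main

lemma eucl_norm_sq {k : ℕ} (y : EuclideanSpace ℝ (Fin k)) : ‖y‖ ^ 2 = ∑ i, y i ^ 2 := by
  rw [EuclideanSpace.norm_eq, Real.sq_sqrt (by positivity)]
  simp [Real.norm_eq_abs, sq_abs]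

section
variable {l₀ lneg lpos : ℕ} (lam : Fin (l₀ + lneg + lpos) → ℝ)

lemma normIff (M : Matrix (Fin lneg) (Fin lpos) ℝ)
    (hn : ∀ r : Fin lneg, lam (jn l₀ lneg lpos r) < 0)
    (hp : ∀ s : Fin lpos, 0 < lam (jp l₀ lneg lpos s)) :
    ‖LinearMap.toContinuousLinearMap (Matrix.toEuclideanLin
        (Matrix.of fun (r : Fin lneg) (s : Fin lpos) =>
          Real.sqrt |lam (jn l₀ lneg lpos r)| * M r s / Real.sqrt (lam (jp l₀ lneg lpos s))))‖ ≤ 1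
    ↔ ∀ c : Fin lpos → ℝ,
      0 ≤ (∑ r, lam (jn l₀ lneg lpos r) * (∑ s, M r s * c s) ^ 2)
        + ∑ s, lam (jp l₀ lneg lpos s) * c s ^ 2 := by
  set B : Matrix (Fin lneg) (Fin lpos) ℝ := Matrix.of fun (r : Fin lneg) (s : Fin lpos) =>
      Real.sqrt |lam (jn l₀ lneg lpos r)| * M r s / Real.sqrt (lam (jp l₀ lneg lpos s)) with hB
  set T := LinearMap.toContinuousLinearMap (Matrix.toEuclideanLin B) with hT
  have hsq : ∀ s, Real.sqrt (lam (jp l₀ lneg lpos s)) ≠ 0 :=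
    fun s => ne_of_gt (Real.sqrt_pos.mpr (hp s))
  have habs : ∀ X : Fin lneg → ℝ,
      (∑ r, lam (jn l₀ lneg lpos r) * X r) = - ∑ r, |lam (jn l₀ lneg lpos r)| * X r := by
    intro X
    rw [← Finset.sum_neg_distrib]
    exact Finset.sum_congr rfl fun r _ => by rw [abs_of_neg (hn r)]; ring
  have key : ∀ c : Fin lpos → ℝ,
      ‖T ((WithLp.equiv 2 (Fin lpos → ℝ)).symm
          (fun s => Real.sqrt (lam (jp l₀ lneg lpos s)) * c s))‖ ^ 2
        = ∑ r, |lam (jn l₀ lneg lpos r)| * (∑ s, M r s * c s) ^ 2 ∧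
      ‖(WithLp.equiv 2 (Fin lpos → ℝ)).symm
          (fun s => Real.sqrt (lam (jp l₀ lneg lpos s)) * c s)‖ ^ 2
        = ∑ s, lam (jp l₀ lneg lpos s) * c s ^ 2 := by
    intro c
    constructor
    · rw [eucl_norm_sq]
      have happ : T ((WithLp.equiv 2 (Fin lpos → ℝ)).symm
          (fun s => Real.sqrt (lam (jp l₀ lneg lpos s)) * c s)) =
          (WithLp.equiv 2 (Fin lneg → ℝ)).symm
            (B.mulVec (fun s => Real.sqrt (lam (jp l₀ lneg lpos s)) * c s)) := by
        simp [hT]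
      rw [happ]
      refine Finset.sum_congr rfl fun r _ => ?_
      simp only [WithLp.equiv_symm_apply, WithLp.ofLp_toLp]
      have hterm : B.mulVec (fun s => Real.sqrt (lam (jp l₀ lneg lpos s)) * c s) r
          = Real.sqrt |lam (jn l₀ lneg lpos r)| * ∑ s, M r s * c s := by
        rw [Matrix.mulVec, dotProduct, Finset.mul_sum]
        refine Finset.sum_congr rfl fun s _ => ?_
        rw [hB]
        simp only [Matrix.of_apply]
        rw [div_mul_eq_mul_div, div_eq_iff (hsq s)]
        ring
      rw [hterm, mul_pow, Real.sq_sqrt (abs_nonneg _)]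
    · rw [eucl_norm_sq]
      refine Finset.sum_congr rfl fun s _ => ?_
      simp only [WithLp.equiv_symm_apply, WithLp.ofLp_toLp]
      rw [mul_pow, Real.sq_sqrt (le_of_lt (hp s))]
  constructor
  · intro hnorm c
    set x := (WithLp.equiv 2 (Fin lpos → ℝ)).symm
        (fun s => Real.sqrt (lam (jp l₀ lneg lpos s)) * c s) with hx
    have h2 : ‖T x‖ ≤ ‖x‖ :=
      (T.le_opNorm x).trans (mul_le_of_le_one_left (norm_nonneg _) hnorm)
    have h3 : ‖T x‖ ^ 2 ≤ ‖x‖ ^ 2 := pow_le_pow_left₀ (norm_nonneg _) h2 2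
    rw [(key c).1, (key c).2] at h3
    rw [habs]
    linarith
  · intro hF
    refine ContinuousLinearMap.opNorm_le_bound _ zero_le_one fun x => ?_
    rw [one_mul]
    set c : Fin lpos → ℝ :=
      fun s => WithLp.equiv 2 (Fin lpos → ℝ) x s / Real.sqrt (lam (jp l₀ lneg lpos s)) with hc
    have hxc : x = (WithLp.equiv 2 (Fin lpos → ℝ)).symm
        (fun s => Real.sqrt (lam (jp l₀ lneg lpos s)) * c s) := by
      have : (fun s => Real.sqrt (lam (jp l₀ lneg lpos s)) * c s)
          = WithLp.equiv 2 (Fin lpos → ℝ) x := by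
        funext s
        rw [hc, mul_comm, div_mul_cancel₀ _ (hsq s)]
      rw [this, (WithLp.equiv 2 (Fin lpos → ℝ)).symm_apply_apply]
    have h0 := hF c
    rw [habs] at h0
    have h3 : ‖T x‖ ^ 2 ≤ ‖x‖ ^ 2 := by
      rw [hxc, (key c).1, (key c).2]
      linarith
    calc ‖T x‖ = Real.sqrt (‖T x‖ ^ 2) := (Real.sqrt_sq (norm_nonneg _)).symm
      _ ≤ Real.sqrt (‖x‖ ^ 2) := Real.sqrt_le_sqrt h3
      _ = ‖x‖ := Real.sqrt_sq (norm_nonneg _)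
end

section Part2
variable {l₀ lneg lpos : ℕ}
variable (A : EuclideanSpace ℝ (Fin (l₀ + lneg + lpos)) →ₗ[ℝ] EuclideanSpace ℝ (Fin (l₀ + lneg + lpos)))
  (e : Fin (l₀ + lneg + lpos) → EuclideanSpace ℝ (Fin (l₀ + lneg + lpos)))
  (lam : Fin (l₀ + lneg + lpos) → ℝ)
  (N : Submodule ℝ (EuclideanSpace ℝ (Fin (l₀ + lneg + lpos))))
  (M : Matrix (Fin lneg) (Fin lpos) ℝ)

lemma nonnegIff (hA : ∀ u v, ⟪A u, v⟫ = ⟪u, A v⟫) (he : Orthonormal ℝ e)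
    (heig : ∀ i, A (e i) = lam i • e i)
    (hzero : ∀ i : Fin (l₀ + lneg + lpos), (i : ℕ) < l₀ → lam i = 0)
    (hmem : ∀ v, v ∈ N ↔ ∀ r : Fin lneg,
      ⟪e (jn l₀ lneg lpos r), v⟫ = ∑ s, M r s * ⟪e (jp l₀ lneg lpos s), v⟫) :
    (∀ x ∈ N, 0 ≤ ⟪x, A x⟫) ↔ ∀ c : Fin lpos → ℝ,
      0 ≤ (∑ r, lam (jn l₀ lneg lpos r) * (∑ s, M r s * c s) ^ 2)
        + ∑ s, lam (jp l₀ lneg lpos s) * c s ^ 2 := by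
  constructor
  · intro hnn c
    set u := (∑ s, c s • e (jp l₀ lneg lpos s))
      + ∑ r, (∑ s, M r s * c s) • e (jn l₀ lneg lpos r) with hu
    have hcp : ∀ s₀, ⟪e (jp l₀ lneg lpos s₀), u⟫ = c s₀ := by
      intro s₀
      rw [hu, inner_add_right, coord_hit e he _ jp_inj c s₀,
        coord_miss e he _ _ _ (fun r => (jn_ne_jp r s₀).symm), add_zero]
    have hcn : ∀ r₀, ⟪e (jn l₀ lneg lpos r₀), u⟫ = ∑ s, M r₀ s * c s := by
      intro r₀
      rw [hu, inner_add_right, coord_hit e he _ jn_inj _ r₀,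
        coord_miss e he _ _ _ (fun s => jn_ne_jp r₀ s), zero_add]
    have huN : u ∈ N := (hmem u).mpr fun r => by
      rw [hcn r]
      exact Finset.sum_congr rfl fun s _ => by rw [hcp s]
    have h := hnn u huN
    rw [Qform A e lam hA he heig hzero u] at h
    refine le_of_le_of_eq h ?_
    congr 1
    · exact Finset.sum_congr rfl fun r _ => by rw [hcn r]
    · exact Finset.sum_congr rfl fun s _ => by rw [hcp s]
  · intro hF x hxN
    rw [Qform A e lam hA he heig hzero x]
    refine le_of_le_of_eq (hF fun s => ⟪e (jp l₀ lneg lpos s), x⟫) ?_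
    congr 1
    exact Finset.sum_congr rfl fun r _ => by rw [← (hmem x).mp hxN r]

lemma finrank_of_hmem (he : Orthonormal ℝ e)
    (hmem : ∀ v, v ∈ N ↔ ∀ r : Fin lneg,
      ⟪e (jn l₀ lneg lpos r), v⟫ = ∑ s, M r s * ⟪e (jp l₀ lneg lpos s), v⟫) :
    Module.finrank ℝ N = l₀ + lpos := by
  set f : Fin lneg → EuclideanSpace ℝ (Fin (l₀ + lneg + lpos)) →ₗ[ℝ] ℝ := fun r =>
    (innerSL ℝ (e (jn l₀ lneg lpos r))).toLinearMap
      - ∑ s, M r s • (innerSL ℝ (e (jp l₀ lneg lpos s))).toLinearMap with hf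
  set L := LinearMap.pi f with hL
  have hLapp : ∀ v r, L v r
      = ⟪e (jn l₀ lneg lpos r), v⟫ - ∑ s, M r s * ⟪e (jp l₀ lneg lpos s), v⟫ := by
    intro v r
    simp [hL, hf, LinearMap.pi_apply, LinearMap.sub_apply, LinearMap.sum_apply,
      LinearMap.smul_apply, smul_eq_mul]
  have hker : LinearMap.ker L = N := by
    ext v
    rw [LinearMap.mem_ker, hmem, funext_iff]
    constructor
    · intro h r
      have := h r
      rw [hLapp, Pi.zero_apply] at this
      exact sub_eq_zero.mp this
    · intro h r
      rw [hLapp, Pi.zero_apply, sub_eq_zero]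
      exact h r
  have hsurj : Function.Surjective L := by
    intro y
    refine ⟨∑ r, y r • e (jn l₀ lneg lpos r), funext fun r => ?_⟩
    rw [hLapp, coord_hit e he _ jn_inj y r,
      Finset.sum_eq_zero fun s _ => by
        rw [coord_miss e he _ _ _ (fun r' => (jn_ne_jp r' s).symm), mul_zero]]
    simp
  have h1 := LinearMap.finrank_range_add_finrank_ker L
  rw [hker, LinearMap.range_eq_top.mpr hsurj, finrank_top,
    Module.finrank_fintype_fun_eq_card, Fintype.card_fin, finrank_euclideanSpace,
    Fintype.card_fin] at h1
  omega

end Part2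

section Part3
variable {l₀ lneg lpos : ℕ}
variable (A : EuclideanSpace ℝ (Fin (l₀ + lneg + lpos)) →ₗ[ℝ] EuclideanSpace ℝ (Fin (l₀ + lneg + lpos)))
  (e : Fin (l₀ + lneg + lpos) → EuclideanSpace ℝ (Fin (l₀ + lneg + lpos)))
  (lam : Fin (l₀ + lneg + lpos) → ℝ)
  (N : Submodule ℝ (EuclideanSpace ℝ (Fin (l₀ + lneg + lpos))))
  (M : Matrix (Fin lneg) (Fin lpos) ℝ)

lemma maximal_of_hmem (hA : ∀ u v, ⟪A u, v⟫ = ⟪u, A v⟫) (he : Orthonormal ℝ e)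
    (heig : ∀ i, A (e i) = lam i • e i)
    (hzero : ∀ i : Fin (l₀ + lneg + lpos), (i : ℕ) < l₀ → lam i = 0)
    (hn : ∀ r : Fin lneg, lam (jn l₀ lneg lpos r) < 0)
    (hmem : ∀ v, v ∈ N ↔ ∀ r : Fin lneg,
      ⟪e (jn l₀ lneg lpos r), v⟫ = ∑ s, M r s * ⟪e (jp l₀ lneg lpos s), v⟫)
    (N' : Submodule ℝ (EuclideanSpace ℝ (Fin (l₀ + lneg + lpos))))
    (hN' : ∀ x ∈ N', 0 ≤ ⟪x, A x⟫) (hle : N ≤ N') : N' = N := by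
  classical
  set V := Submodule.span ℝ (Set.range fun r => e (jn l₀ lneg lpos r)) with hV
  have hVrank : Module.finrank ℝ V = lneg := by
    rw [hV, show (Set.range fun r => e (jn l₀ lneg lpos r))
        = Set.range (e ∘ jn l₀ lneg lpos) from rfl,
      finrank_span_eq_card ((he.comp _ jn_inj).linearIndependent)]
    simp
  have hdisj : N' ⊓ V = ⊥ := by
    rw [eq_bot_iff]
    rintro x ⟨hxN', hxV⟩
    obtain ⟨t, ht⟩ := Submodule.mem_span_range_iff_exists_fun ℝ |>.mp hxV
    have hq := hN' x hxN'
    rw [Qform A e lam hA he heig hzero x] at hq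
    have hpos0 : ∀ s, ⟪e (jp l₀ lneg lpos s), x⟫ = 0 := fun s => by
      rw [← ht]; exact coord_miss e he _ _ _ fun r => (jn_ne_jp r s).symm
    have hnegc : ∀ r, ⟪e (jn l₀ lneg lpos r), x⟫ = t r := fun r => by
      rw [← ht]; exact coord_hit e he _ jn_inj t r
    have e1 : (∑ s, lam (jp l₀ lneg lpos s) * ⟪e (jp l₀ lneg lpos s), x⟫ ^ 2) = 0 :=
      Finset.sum_eq_zero fun s _ => by rw [hpos0 s]; ring
    have e2 : (∑ r, lam (jn l₀ lneg lpos r) * ⟪e (jn l₀ lneg lpos r), x⟫ ^ 2)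
        = ∑ r, lam (jn l₀ lneg lpos r) * t r ^ 2 :=
      Finset.sum_congr rfl fun r _ => by rw [hnegc r]
    rw [e1, e2, add_zero] at hq
    have hterm : ∀ r ∈ Finset.univ, lam (jn l₀ lneg lpos r) * t r ^ 2 ≤ 0 := fun r _ =>
      mul_nonpos_of_nonpos_of_nonneg (le_of_lt (hn r)) (sq_nonneg _)
    have hzero' : ∀ r ∈ Finset.univ, lam (jn l₀ lneg lpos r) * t r ^ 2 = 0 :=
      (Finset.sum_eq_zero_iff_of_nonpos hterm).mp
        (le_antisymm (Finset.sum_nonpos hterm) hq)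
    have ht0 : ∀ r, t r = 0 := fun r => by
      have := hzero' r (Finset.mem_univ r)
      rcases mul_eq_zero.mp this with h | h
      · exact absurd h (ne_of_lt (hn r))
      · exact by nlinarith [sq_nonneg (t r)]
    have : x = 0 := by
      rw [← ht]
      exact Finset.sum_eq_zero fun r _ => by rw [ht0 r, zero_smul]
    simp [this]
  have h2 := Submodule.finrank_sup_add_finrank_inf_eq N' V
  rw [hdisj, finrank_bot, add_zero, hVrank] at h2
  have h3 : Module.finrank ℝ ↥(N' ⊔ V) ≤ l₀ + lneg + lpos := by
    have := Submodule.finrank_le (N' ⊔ V)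
    rwa [finrank_euclideanSpace, Fintype.card_fin] at this
  have h4 : Module.finrank ℝ N' ≤ l₀ + lpos := by omega
  refine (Submodule.eq_of_le_of_finrank_le hle ?_).symm
  rw [finrank_of_hmem e N M he hmem]
  exact h4

end Part3

section Part4
variable {l₀ lneg lpos : ℕ}
variable (A : EuclideanSpace ℝ (Fin (l₀ + lneg + lpos)) →ₗ[ℝ] EuclideanSpace ℝ (Fin (l₀ + lneg + lpos)))
  (e : Fin (l₀ + lneg + lpos) → EuclideanSpace ℝ (Fin (l₀ + lneg + lpos)))
  (lam : Fin (l₀ + lneg + lpos) → ℝ)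
  (N : Submodule ℝ (EuclideanSpace ℝ (Fin (l₀ + lneg + lpos))))

lemma exists_M_of_maximal (hA : ∀ u v, ⟪A u, v⟫ = ⟪u, A v⟫) (he : Orthonormal ℝ e)
    (heig : ∀ i, A (e i) = lam i • e i)
    (hzero : ∀ i : Fin (l₀ + lneg + lpos), (i : ℕ) < l₀ → lam i = 0)
    (hn : ∀ r : Fin lneg, lam (jn l₀ lneg lpos r) < 0)
    (hp : ∀ s : Fin lpos, 0 < lam (jp l₀ lneg lpos s))
    (hnn : ∀ x ∈ N, 0 ≤ ⟪x, A x⟫)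
    (hmax : ∀ N' : Submodule ℝ (EuclideanSpace ℝ (Fin (l₀ + lneg + lpos))),
      (∀ x ∈ N', 0 ≤ ⟪x, A x⟫) → N ≤ N' → N' = N) :
    ∃ M : Matrix (Fin lneg) (Fin lpos) ℝ, ∀ v, v ∈ N ↔ ∀ r : Fin lneg,
      ⟪e (jn l₀ lneg lpos r), v⟫ = ∑ s, M r s * ⟪e (jp l₀ lneg lpos s), v⟫ := by
  classical
  -- Step a: kernel eigenvectors belong to N
  have hzN : ∀ k : Fin l₀, e (jz l₀ lneg lpos k) ∈ N := by
    intro k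
    have hAz : A (e (jz l₀ lneg lpos k)) = 0 := by
      rw [heig, hzero _ (show ((jz l₀ lneg lpos k : Fin _) : ℕ) < l₀ from k.2), zero_smul]
    have hsup : ∀ x ∈ N ⊔ ℝ ∙ (e (jz l₀ lneg lpos k)), 0 ≤ ⟪x, A x⟫ := by
      intro x hx
      obtain ⟨y, hy, z, hz, rfl⟩ := Submodule.mem_sup.mp hx
      obtain ⟨t, rfl⟩ := Submodule.mem_span_singleton.mp hz
      have h1 : A (t • e (jz l₀ lneg lpos k)) = 0 := by rw [map_smul, hAz, smul_zero]
      have h2 : ⟪t • e (jz l₀ lneg lpos k), A y⟫ = 0 := by rw [← hA, h1, inner_zero_left]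
      have h3 : ∀ w, ⟪w, A (t • e (jz l₀ lneg lpos k))⟫ = 0 := fun w => by
        rw [h1, inner_zero_right]
      rw [map_add, inner_add_left, inner_add_right, inner_add_right, h2, h3 y,
        h3 (t • e (jz l₀ lneg lpos k)), add_zero, add_zero, add_zero]
      exact hnn y hy
    have hEq := hmax _ hsup le_sup_left
    rw [← hEq]
    exact Submodule.mem_sup_right (Submodule.mem_span_singleton_self _)
  -- Step b
  have hkey : ∀ v ∈ N, (∀ s, ⟪e (jp l₀ lneg lpos s), v⟫ = 0) →
      ∀ r, ⟪e (jn l₀ lneg lpos r), v⟫ = 0 := by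
    intro v hv hp0 r
    have hq := hnn v hv
    rw [Qform A e lam hA he heig hzero v] at hq
    have e1 : (∑ s, lam (jp l₀ lneg lpos s) * ⟪e (jp l₀ lneg lpos s), v⟫ ^ 2) = 0 :=
      Finset.sum_eq_zero fun s _ => by rw [hp0 s]; ring
    rw [e1, add_zero] at hq
    have hterm : ∀ r' ∈ Finset.univ,
        lam (jn l₀ lneg lpos r') * ⟪e (jn l₀ lneg lpos r'), v⟫ ^ 2 ≤ 0 := fun r' _ =>
      mul_nonpos_of_nonpos_of_nonneg (le_of_lt (hn r')) (sq_nonneg _)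
    have h0 := (Finset.sum_eq_zero_iff_of_nonpos hterm).mp
      (le_antisymm (Finset.sum_nonpos hterm) hq) r (Finset.mem_univ r)
    rcases mul_eq_zero.mp h0 with h | h
    · exact absurd h (ne_of_lt (hn r))
    · exact sq_eq_zero_iff.mp h
  -- Step c: surjectivity onto positive coordinates
  set P : EuclideanSpace ℝ (Fin (l₀ + lneg + lpos)) →ₗ[ℝ] EuclideanSpace ℝ (Fin lpos) :=
    ((WithLp.linearEquiv 2 ℝ (Fin lpos → ℝ)).symm.toLinearMap).comp
      (LinearMap.pi fun s => (innerSL ℝ (e (jp l₀ lneg lpos s))).toLinearMap) with hP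
  have hPapp : ∀ v s, P v s = ⟪e (jp l₀ lneg lpos s), v⟫ := fun v s => rfl
  set W := N.map P with hW
  have hWtop : W = ⊤ := by
    by_contra hWne
    have hWo : Wᗮ ≠ ⊥ := fun h => hWne (Submodule.orthogonal_eq_bot_iff.mp h)
    obtain ⟨z, hzW, hz0⟩ := Submodule.exists_mem_ne_zero_of_ne_bot hWo
    set y : Fin lpos → ℝ := fun s => z s / lam (jp l₀ lneg lpos s) with hy
    set w := ∑ s, y s • e (jp l₀ lneg lpos s) with hwdef
    have hAw : A w = ∑ s, (y s * lam (jp l₀ lneg lpos s)) • e (jp l₀ lneg lpos s) := by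
      rw [hwdef, map_sum]
      exact Finset.sum_congr rfl fun s _ => by rw [map_smul, heig, smul_smul]
    have horth : ∀ v ∈ N, ⟪v, A w⟫ = 0 := by
      intro v hv
      rw [hAw, inner_sum]
      have hterm : ∀ s, ⟪v, (y s * lam (jp l₀ lneg lpos s)) • e (jp l₀ lneg lpos s)⟫
          = z s * P v s := by
        intro s
        rw [real_inner_smul_right, hPapp, real_inner_comm, hy]
        field_simp [(hp s).ne']
      rw [Finset.sum_congr rfl fun s _ => hterm s]
      have hzv : ⟪(P v : EuclideanSpace ℝ (Fin lpos)), z⟫ = 0 :=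
        (Submodule.mem_orthogonal W z).mp hzW (P v) (Submodule.mem_map_of_mem hv)
      rw [real_inner_comm] at hzv
      rw [← hzv, PiLp.inner_apply]
      simp [RCLike.inner_apply]
      exact Finset.sum_congr rfl fun s _ => mul_comm _ _
    have hwAw : 0 ≤ ⟪w, A w⟫ := by
      rw [hAw, inner_sum]
      refine Finset.sum_nonneg fun s _ => ?_
      rw [real_inner_smul_right, real_inner_comm, hwdef, coord_hit e he _ jp_inj]
      nlinarith [hp s, sq_nonneg (y s)]
    have hsup : ∀ x ∈ N ⊔ ℝ ∙ w, 0 ≤ ⟪x, A x⟫ := by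
      intro x hx
      obtain ⟨v, hv, z', hz', rfl⟩ := Submodule.mem_sup.mp hx
      obtain ⟨t, rfl⟩ := Submodule.mem_span_singleton.mp hz'
      rw [map_add, inner_add_left, inner_add_right, inner_add_right]
      have c1 : ⟪v, A (t • w)⟫ = 0 := by
        rw [map_smul, real_inner_smul_right, horth v hv, mul_zero]
      have c2 : ⟪t • w, A v⟫ = 0 := by
        rw [real_inner_smul_left, ← hA w v, real_inner_comm, horth v hv, mul_zero]
      have c3 : 0 ≤ ⟪t • w, A (t • w)⟫ := by
        rw [map_smul, real_inner_smul_left, real_inner_smul_right]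
        nlinarith [mul_nonneg (mul_self_nonneg t) hwAw]
      have := hnn v hv
      linarith
    have hwN : w ∈ N := by
      have hEq := hmax _ hsup le_sup_left
      rw [← hEq]
      exact Submodule.mem_sup_right (Submodule.mem_span_singleton_self _)
    have hPw : ∀ s, P w s = y s := fun s => by
      rw [hPapp, hwdef, coord_hit e he _ jp_inj]
    have h0 : ⟪(P w : EuclideanSpace ℝ (Fin lpos)), z⟫ = 0 :=
      (Submodule.mem_orthogonal W z).mp hzW (P w) (Submodule.mem_map_of_mem hwN)
    have hzall : ∀ s, z s = 0 := by
      intro s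
      have hsum : (∑ s, z s ^ 2 / lam (jp l₀ lneg lpos s)) = 0 := by
        rw [← h0, PiLp.inner_apply]
        refine Finset.sum_congr rfl fun s _ => ?_
        rw [RCLike.inner_apply, conj_trivial, hPw, hy]
        ring
      have hterm : ∀ s ∈ Finset.univ, 0 ≤ z s ^ 2 / lam (jp l₀ lneg lpos s) := fun s _ =>
        div_nonneg (sq_nonneg _) (le_of_lt (hp s))
      have hz2 := (Finset.sum_eq_zero_iff_of_nonneg hterm).mp hsum s (Finset.mem_univ s)
      rcases div_eq_zero_iff.mp hz2 with h | h
      · exact sq_eq_zero_iff.mp h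
      · exact absurd h (ne_of_gt (hp s))
    exact hz0 (by ext s; exact hzall s)
  have hsurj : ∀ yv : EuclideanSpace ℝ (Fin lpos), ∃ v ∈ N, P v = yv := by
    intro yv
    have : yv ∈ W := by rw [hWtop]; trivial
    obtain ⟨v, hv, hveq⟩ := Submodule.mem_map.mp this
    exact ⟨v, hv, hveq⟩
  -- Step d: choose generators
  have hvs : ∀ s₀ : Fin lpos, ∃ v, v ∈ N ∧ (∀ k, ⟪e (jz l₀ lneg lpos k), v⟫ = 0)
      ∧ ∀ s, ⟪e (jp l₀ lneg lpos s), v⟫ = if s₀ = s then 1 else 0 := by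
    intro s₀
    obtain ⟨v, hvN, hPv⟩ := hsurj ((WithLp.equiv 2 (Fin lpos → ℝ)).symm
      fun s => if s₀ = s then 1 else 0)
    refine ⟨v - ∑ k, ⟪e (jz l₀ lneg lpos k), v⟫ • e (jz l₀ lneg lpos k),
      Submodule.sub_mem _ hvN (Submodule.sum_mem _ fun k _ =>
        Submodule.smul_mem _ _ (hzN k)), fun k => ?_, fun s => ?_⟩
    · rw [inner_sub_right, coord_hit e he _ jz_inj _ k, sub_self]
    · rw [inner_sub_right, coord_miss e he _ _ _ (fun k => (jz_ne_jp k s).symm), sub_zero]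
      calc ⟪e (jp l₀ lneg lpos s), v⟫ = P v s := (hPapp v s).symm
        _ = if s₀ = s then 1 else 0 := by rw [hPv, WithLp.equiv_symm_apply, WithLp.ofLp_toLp]
  choose vs hvsN hvsz hvsp using hvs
  -- coordinate evaluation of combinations of the vs
  have hps : ∀ (d : Fin lpos → ℝ) s', ⟪e (jp l₀ lneg lpos s'), ∑ s, d s • vs s⟫ = d s' := by
    intro d s'
    rw [inner_sum, Finset.sum_congr rfl fun s _ => by
      rw [real_inner_smul_right, hvsp s s']]
    simp
  have hzs : ∀ (d : Fin lpos → ℝ) k, ⟪e (jz l₀ lneg lpos k), ∑ s, d s • vs s⟫ = 0 := by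
    intro d k
    rw [inner_sum]
    exact Finset.sum_eq_zero fun s _ => by rw [real_inner_smul_right, hvsz s k, mul_zero]
  have hns : ∀ (d : Fin lpos → ℝ) r, ⟪e (jn l₀ lneg lpos r), ∑ s, d s • vs s⟫
      = ∑ s, d s * ⟪e (jn l₀ lneg lpos r), vs s⟫ := by
    intro d r
    rw [inner_sum]
    exact Finset.sum_congr rfl fun s _ => real_inner_smul_right _ _ _
  refine ⟨Matrix.of fun r s => ⟪e (jn l₀ lneg lpos r), vs s⟫, fun v => ?_⟩
  constructor
  · intro hvN r
    set u := v - ∑ s, ⟪e (jp l₀ lneg lpos s), v⟫ • vs s with hu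
    have huN : u ∈ N := Submodule.sub_mem _ hvN (Submodule.sum_mem _ fun s _ =>
      Submodule.smul_mem _ _ (hvsN s))
    have hup : ∀ s', ⟪e (jp l₀ lneg lpos s'), u⟫ = 0 := by
      intro s'
      rw [hu, inner_sub_right, hps, sub_self]
    have hun := hkey u huN hup r
    rw [hu, inner_sub_right, hns, sub_eq_zero] at hun
    rw [hun]
    exact Finset.sum_congr rfl fun s _ => by rw [Matrix.of_apply, mul_comm]
  · intro hcond
    set u := v - (∑ s, ⟪e (jp l₀ lneg lpos s), v⟫ • vs s)
      - ∑ k, ⟪e (jz l₀ lneg lpos k), v⟫ • e (jz l₀ lneg lpos k) with hu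
    have hcoords : ∀ i, ⟪e i, u⟫ = 0 := by
      intro i
      rcases index_cases i with ⟨k, rfl⟩ | ⟨r, rfl⟩ | ⟨s, rfl⟩
      · rw [hu, inner_sub_right, inner_sub_right, hzs, coord_hit e he _ jz_inj, sub_zero,
          sub_self]
      · rw [hu, inner_sub_right, inner_sub_right,
          coord_miss e he _ _ _ (fun k => (jz_ne_jn k r).symm), sub_zero, hns,
          sub_eq_zero, hcond r]
        exact Finset.sum_congr rfl fun s _ => by rw [Matrix.of_apply, mul_comm]
      · rw [hu, inner_sub_right, inner_sub_right,
          coord_miss e he _ _ _ (fun k => (jz_ne_jp k s).symm), sub_zero, hps, sub_self]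
    have hu0 : u = 0 := eq_zero_of_coords e he u hcoords
    have hveq : v = (∑ s, ⟪e (jp l₀ lneg lpos s), v⟫ • vs s)
        + ∑ k, ⟪e (jz l₀ lneg lpos k), v⟫ • e (jz l₀ lneg lpos k) := by
      rw [hu, sub_sub] at hu0
      have := sub_eq_zero.mp hu0
      exact this
    rw [hveq]
    exact Submodule.add_mem _ (Submodule.sum_mem _ fun s _ =>
        Submodule.smul_mem _ _ (hvsN s))
      (Submodule.sum_mem _ fun k _ => Submodule.smul_mem _ _ (hzN k))

end Part4

/-- Algebraic characterization of maximal nonnegative subspaces for a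
symmetric operator `A` on `ℝ^m` with orthonormal eigenbasis `e₁,…,e_m` whose eigenvalues
are zero for the first `l₀` indices, negative for the next `l₋`, and positive for the
last `l₊ = m − l₀ − l₋`: a subspace `N` is maximal nonnegative for `A` iff there is an
`l₋ × l₊` matrix `M` with
`N = { v : ⟨e_{l₀+r}, v⟩ = Σ_s M_{rs} ⟨e_{l₀+l₋+s}, v⟩ }` and `‖D₋ M D₊⁻¹‖ ≤ 1`,
where `D₋ = diag(√|λ_{l₀+r}|)` and `D₊ = diag(√λ_{l₀+l₋+s})`. -/
theorem maximal_nonneg_subspace_characterization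
    (m l₀ lneg lpos : ℕ) (hsum : l₀ + lneg + lpos = m)
    (A : EuclideanSpace ℝ (Fin m) →ₗ[ℝ] EuclideanSpace ℝ (Fin m))
    (hA : ∀ u v : EuclideanSpace ℝ (Fin m), ⟪A u, v⟫ = ⟪u, A v⟫)
    (e : Fin m → EuclideanSpace ℝ (Fin m)) (lam : Fin m → ℝ)
    (he : Orthonormal ℝ e)
    (heig : ∀ i : Fin m, A (e i) = lam i • e i)
    (hzero : ∀ i : Fin m, (i : ℕ) < l₀ → lam i = 0)
    (hneg : ∀ i : Fin m, l₀ ≤ (i : ℕ) → (i : ℕ) < l₀ + lneg → lam i < 0)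
    (hpos : ∀ i : Fin m, l₀ + lneg ≤ (i : ℕ) → 0 < lam i)
    (N : Submodule ℝ (EuclideanSpace ℝ (Fin m))) :
    ((∀ x ∈ N, 0 ≤ ⟪x, A x⟫) ∧
      ∀ N' : Submodule ℝ (EuclideanSpace ℝ (Fin m)),
        (∀ x ∈ N', 0 ≤ ⟪x, A x⟫) → N ≤ N' → N' = N) ↔
    (∃ M : Matrix (Fin lneg) (Fin lpos) ℝ,
      (∀ v : EuclideanSpace ℝ (Fin m), v ∈ N ↔ ∀ r : Fin lneg,
        ⟪e ⟨l₀ + (r : ℕ), by omega⟩, v⟫ =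
          ∑ s : Fin lpos, M r s * ⟪e ⟨l₀ + lneg + (s : ℕ), by omega⟩, v⟫) ∧
      ‖LinearMap.toContinuousLinearMap (Matrix.toEuclideanLin
          (Matrix.of fun (r : Fin lneg) (s : Fin lpos) =>
            Real.sqrt |lam ⟨l₀ + (r : ℕ), by omega⟩| * M r s /
              Real.sqrt (lam ⟨l₀ + lneg + (s : ℕ), by omega⟩)))‖ ≤ 1) := by
  subst hsum
  have hn : ∀ r : Fin lneg, lam (jn l₀ lneg lpos r) < 0 := fun r =>
    hneg _ (Nat.le_add_right l₀ r) (Nat.add_lt_add_left r.2 l₀)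
  have hp : ∀ s : Fin lpos, 0 < lam (jp l₀ lneg lpos s) := fun s =>
    hpos _ (Nat.le_add_right (l₀ + lneg) s)
  constructor
  · rintro ⟨hnn, hmax⟩
    obtain ⟨M, hmem⟩ := exists_M_of_maximal A e lam N hA he heig hzero hn hp hnn hmax
    exact ⟨M, hmem,
      (normIff lam M hn hp).mpr ((nonnegIff A e lam N M hA he heig hzero hmem).mp hnn)⟩
  · rintro ⟨M, hmem, hnorm⟩
    have hmem' : ∀ v, v ∈ N ↔ ∀ r : Fin lneg,
        ⟪e (jn l₀ lneg lpos r), v⟫ = ∑ s, M r s * ⟪e (jp l₀ lneg lpos s), v⟫ := hmem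
    have hnorm' : ‖LinearMap.toContinuousLinearMap (Matrix.toEuclideanLin
        (Matrix.of fun (r : Fin lneg) (s : Fin lpos) =>
          Real.sqrt |lam (jn l₀ lneg lpos r)| * M r s /
            Real.sqrt (lam (jp l₀ lneg lpos s))))‖ ≤ 1 := hnorm
    have hnn := (nonnegIff A e lam N M hA he heig hzero hmem').mpr
      ((normIff lam M hn hp).mp hnorm')
    exact ⟨hnn, fun N' hN' hle =>
      maximal_of_hmem A e lam N M hA he heig hzero hn hmem' N' hN' hle⟩
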